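/- Let K be a field and m a positive natural number. Let E be the set of exponent vectors e : Fin 4 → ℕ with ∑ i, e i = m, and let ψ be the linear map from the space of homogeneous degree-2 polynomials in variables (Z_e)_{e ∈ E} over K to the space of homogeneous degree-2m polynomials in K[X₀, X₁, X₂, X₃], induced by the substitution Z_e ↦ X₀^(e 0) X₁^(e 1) X₂^(e 2) X₃^(e 3). Then the kernel of ψ has K-dimension C(C(m+3,3)+1, 2) − C(2m+3,3), where C(a,b) denotes the binomial coefficient. -/

import Mathlib

open MvPolynomial

section Aux

variable {K : Type*} [Field K]

private lemma vqk_degree_eq_sum_univ {ι : Type*} [Fintype ι] (d : ι →₀ ℕ) :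
    d.degree = ∑ i, d i :=
  Finset.sum_subset (Finset.subset_univ _)
    (fun _ _ hi => Finsupp.notMem_support_iff.mp hi)

private lemma vqk_prod_X_pow {ι : Type*} [Fintype ι] [DecidableEq ι] (d : ι →₀ ℕ) :
    ∏ i, (X i : MvPolynomial ι K) ^ d i = monomial d 1 := by
  rw [← prod_X_pow_eq_monomial]
  exact (Finset.prod_subset (Finset.subset_univ _)
    (fun i _ hi => by rw [Finsupp.notMem_support_iff.mp hi, pow_zero])).symm

private lemma vqk_split {ι : Type*} [Fintype ι] [DecidableEq ι] :
    ∀ (p q : ℕ) (d : ι → ℕ), ∑ i, d i = p + q →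
      ∃ a b : ι → ℕ, (∑ i, a i = p) ∧ (∑ i, b i = q) ∧ a + b = d := by
  intro p
  induction p with
  | zero =>
    intro q d hd
    exact ⟨0, d, by simp, by simpa using hd, by simp⟩
  | succ p ih =>
    intro q d hd
    have hpos : 0 < ∑ i, d i := by omega
    have : ∃ i, d i ≠ 0 := by
      by_contra h
      push_neg at h
      simp [Finset.sum_eq_zero (fun i _ => h i)] at hpos
    obtain ⟨i0, hi0⟩ := this
    set d' : ι → ℕ := Function.update d i0 (d i0 - 1) with hd'
    have hsum' : ∑ i, d' i = p + q := by
      have := Finset.sum_update_of_mem (Finset.mem_univ i0) d (d i0 - 1)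
      rw [hd', this]
      have := Finset.sum_eq_sum_sdiff_singleton_add (Finset.mem_univ i0) d
      omega
    obtain ⟨a, b, ha, hb, hab⟩ := ih q d' hsum'
    refine ⟨Function.update a i0 (a i0 + 1), b, ?_, hb, ?_⟩
    · rw [Finset.sum_update_of_mem (Finset.mem_univ i0)]
      have := Finset.sum_eq_sum_sdiff_singleton_add (Finset.mem_univ i0) a
      omega
    · funext i
      have h1 : a i + b i = d' i := congrFun hab i
      by_cases h : i = i0
      · subst h
        simp only [Pi.add_apply, Function.update_self]
        have : d' i = d i - 1 := by simp [hd']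
        omega
      · simp only [Pi.add_apply, Function.update_of_ne h]
        have : d' i = d i := by simp [hd', h]
        omega

private noncomputable def vqk_equiv (σ : Type*) [Fintype σ] [DecidableEq σ] (n : ℕ) :
    Sym σ n ≃ ↥{d : σ →₀ ℕ | d.degree = n} :=
  (Sym.equivNatSum σ n).trans (Equiv.subtypeEquivRight fun d => by
    simp [Finsupp.degree, Finsupp.sum, Set.mem_setOf_eq]; exact Iff.rfl)

private lemma vqk_finrank_homog (σ : Type*) [Fintype σ] [DecidableEq σ] (n : ℕ) :
    Module.finrank K (homogeneousSubmodule σ K n) =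
      (Fintype.card σ + n - 1).choose n := by
  classical
  letI : Fintype ↥{d : σ →₀ ℕ | d.degree = n} := Fintype.ofEquiv _ (vqk_equiv σ n)
  have hEq : homogeneousSubmodule σ K n = restrictSupport K {d | d.degree = n} :=
    homogeneousSubmodule_eq_finsupp_supported σ K n
  rw [hEq, Module.finrank_eq_card_basis (basisRestrictSupport K _)]
  rw [← Fintype.card_congr (vqk_equiv σ n), Sym.card_sym_eq_choose]

private lemma vqk_fd_homog (σ : Type*) [Fintype σ] [DecidableEq σ] (n : ℕ) :
    FiniteDimensional K ↥(homogeneousSubmodule σ K n) := by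
  classical
  letI : Fintype ↥{d : σ →₀ ℕ | d.degree = n} := Fintype.ofEquiv _ (vqk_equiv σ n)
  have hEq : homogeneousSubmodule σ K n = restrictSupport K {d | d.degree = n} :=
    homogeneousSubmodule_eq_finsupp_supported σ K n
  rw [hEq]
  exact Module.Finite.of_basis (basisRestrictSupport K _)

end Aux

theorem veronese_quadrics_kernel_dim {K : Type*} [Field K] (m : ℕ) (hm : 0 < m) :
    Module.finrank K
        ↥(LinearMap.ker
            (aeval (fun e : {e : Fin 4 → ℕ // ∑ i, e i = m} =>
              ∏ i, (X i : MvPolynomial (Fin 4) K) ^ (e : Fin 4 → ℕ) i)).toLinearMap ⊓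
          homogeneousSubmodule {e : Fin 4 → ℕ // ∑ i, e i = m} K 2) =
      Nat.choose (Nat.choose (m + 3) 3 + 1) 2 - Nat.choose (2 * m + 3) 3 := by
  classical
  set E := {e : Fin 4 → ℕ // ∑ i, e i = m} with hE
  letI : Fintype E := Fintype.ofEquiv _ (Sym.equivNatSumOfFintype (Fin 4) m)
  set g : E → MvPolynomial (Fin 4) K :=
    fun e => ∏ i, (X i : MvPolynomial (Fin 4) K) ^ (e : Fin 4 → ℕ) i with hg
  set ψ : MvPolynomial E K →ₗ[K] MvPolynomial (Fin 4) K := (aeval g).toLinearMap with hψ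
  set H2 := homogeneousSubmodule E K 2 with hH2
  set T := homogeneousSubmodule (Fin 4) K (2 * m) with hT
  -- each generator image is a degree-m monomial
  have hgmono : ∀ e : E, g e = monomial (Finsupp.equivFunOnFinite.symm (e : Fin 4 → ℕ)) 1 := by
    intro e
    rw [hg, ← vqk_prod_X_pow (Finsupp.equivFunOnFinite.symm (e : Fin 4 → ℕ))]
    simp
  have hghom : ∀ e : E, (g e).IsHomogeneous m := by
    intro e
    rw [hgmono e]
    exact isHomogeneous_monomial _ (by
      rw [vqk_degree_eq_sum_univ]; simpa using e.2)
  haveI : FiniteDimensional K ↥H2 := vqk_fd_homog E 2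
  set f := ψ.domRestrict H2 with hf
  -- kernel identification
  have hker : Module.finrank K ↥(LinearMap.ker ψ ⊓ H2) = Module.finrank K ↥(LinearMap.ker f) := by
    have h1 : LinearMap.ker f = Submodule.comap H2.subtype (LinearMap.ker ψ ⊓ H2) := by
      rw [hf, LinearMap.ker_domRestrict]
      ext x
      simp [Submodule.mem_comap]
    rw [h1]
    exact (LinearEquiv.finrank_eq (Submodule.comapSubtypeEquivOfLe inf_le_right)).symm
  -- range identification
  have hrange : LinearMap.range f = T := by
    rw [hf, LinearMap.range_domRestrict]
    apply le_antisymm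
    · rintro x ⟨p, hp, rfl⟩
      rw [hT, mem_homogeneousSubmodule]
      have := (hp : p.IsHomogeneous 2).aeval hghom (g := g)
      rw [mul_comm] at this
      exact this
    · rw [hT, homogeneousSubmodule_eq_finsupp_supported, AddMonoidAlgebra.supported_eq_span_single,
        Submodule.span_le]
      rintro x ⟨d, hd, rfl⟩
      have hd' : ∑ i, d i = m + m := by
        rw [← vqk_degree_eq_sum_univ]
        simpa [two_mul] using hd
      obtain ⟨a, b, ha, hb, hab⟩ := vqk_split m m (d : Fin 4 → ℕ) hd'
      set e1 : E := ⟨a, ha⟩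
      set e2 : E := ⟨b, hb⟩
      refine ⟨X e1 * X e2, ?_, ?_⟩
      · show X e1 * X e2 ∈ homogeneousSubmodule E K 2
        rw [mem_homogeneousSubmodule]
        simpa using (isHomogeneous_X K e1).mul (isHomogeneous_X K e2)
      · have : ψ (X e1 * X e2) = g e1 * g e2 := by simp [hψ]
        rw [this, hgmono e1, hgmono e2, monomial_mul, mul_one]
        have hsum : Finsupp.equivFunOnFinite.symm (e1 : Fin 4 → ℕ) +
            Finsupp.equivFunOnFinite.symm (e2 : Fin 4 → ℕ) = d := by
          ext i
          simpa using congrFun hab i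
        rw [hsum]
        exact (single_eq_monomial d 1).symm
  -- rank nullity
  have hrn := LinearMap.finrank_range_add_finrank_ker f
  have hsymm1 : (m + 3).choose m = (m + 3).choose 3 := by
    simpa using Nat.choose_symm (show 3 ≤ m + 3 by omega)
  have hsymm2 : (2 * m + 3).choose (2 * m) = (2 * m + 3).choose 3 := by
    simpa using Nat.choose_symm (show 3 ≤ 2 * m + 3 by omega)
  have hH2dim : Module.finrank K ↥H2 = ((m + 3).choose 3 + 1).choose 2 := by
    rw [hH2, vqk_finrank_homog]
    have hcard : Fintype.card E = (m + 3).choose 3 := by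
      rw [← Fintype.card_congr (Sym.equivNatSumOfFintype (Fin 4) m), Sym.card_sym_eq_choose,
        Fintype.card_fin, show 4 + m - 1 = m + 3 by omega, hsymm1]
    rw [hcard]
    congr 1
  have hTdim : Module.finrank K ↥T = (2 * m + 3).choose 3 := by
    rw [hT, vqk_finrank_homog, Fintype.card_fin,
      show 4 + 2 * m - 1 = 2 * m + 3 by omega, hsymm2]
  rw [hker]
  rw [hrange, hTdim, hH2dim] at hrn
  omega
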